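/- (Representation formula for the call price.) Let (Ω, F, P) be a probability space, G ⊆ F a sub-σ-algebra, σ > 0, T > 0, ρ ∈ (−1, 1), x, κ ∈ ℝ. Let Λ and B be G-measurable real random variables with e^{−Λ} and e^{σρB} integrable, and let W be a real random variable independent of G with standard Gaussian law N(0,1). Set X = x + Λ − σ²T/2 + σρB + σ√((1−ρ²)T)·W, d₁ = (x − κ + Λ + σρB + σ²T/2 − σ²ρ²T)/(σ√((1−ρ²)T)), and d₂ = (x − κ + Λ + σρB − σ²T/2)/(σ√((1−ρ²)T)). Then E[e^{−Λ}(e^X − e^κ)^+] = e^{x − σ²ρ²T/2} · E[e^{σρB} Φ(d₁)] − e^κ · E[e^{−Λ} Φ(d₂)]. -/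

import Mathlib

open MeasureTheory ProbabilityTheory Real

/-- The standard normal cumulative distribution function
`Φ(x) = ∫_{−∞}^x e^{−t²/2}/√(2π) dt`. -/
noncomputable def stdNormalCDF (x : ℝ) : ℝ :=
  ∫ t in Set.Iic x, Real.exp (-t ^ 2 / 2) / Real.sqrt (2 * Real.pi)

section CallPriceAux
open Set

lemma phi_integrable : Integrable (fun t : ℝ => Real.exp (-t ^ 2 / 2) / Real.sqrt (2 * Real.pi)) := by
  have : (fun t : ℝ => Real.exp (-t ^ 2 / 2) / Real.sqrt (2 * Real.pi))
      = fun t : ℝ => Real.exp (-(1/2) * t ^ 2) / Real.sqrt (2 * Real.pi) := by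
    funext t; ring_nf
  rw [this]
  exact (integrable_exp_neg_mul_sq (by norm_num)).div_const _

-- ∫ over Ici a of phi = Φ(-a)
lemma integral_Ici_phi (a : ℝ) :
    ∫ t in Ici a, Real.exp (-t ^ 2 / 2) / Real.sqrt (2 * Real.pi) = stdNormalCDF (-a) := by
  rw [integral_Ici_eq_integral_Ioi]
  have := integral_comp_neg_Iic (-a) (fun t : ℝ => Real.exp (-t ^ 2 / 2) / Real.sqrt (2 * Real.pi))
  simp only [neg_neg] at this
  rw [← this]
  unfold stdNormalCDF
  congr 1; funext t; rw [neg_sq]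

-- translation
lemma integral_Ici_comp_sub (a s : ℝ) (f : ℝ → ℝ) :
    ∫ t in Ici a, f (t - s) = ∫ t in Ici (a - s), f t := by
  have h : MeasurePreserving (fun x : ℝ => x + s) volume volume :=
    measurePreserving_add_right volume s
  have e : MeasurableEmbedding (fun x : ℝ => x + s) :=
    (Homeomorph.addRight s).isClosedEmbedding.measurableEmbedding
  have := (h.setIntegral_preimage_emb e (fun t => f (t - s)) (Ici a)).symm
  have hpre : (fun x : ℝ => x + s) ⁻¹' Ici a = Ici (a - s) := by
    ext t; simp [sub_le_iff_le_add]
  rw [hpre] at this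
  simp only [add_sub_cancel_right] at this
  exact this

noncomputable def phi (w : ℝ) : ℝ := Real.exp (-w ^ 2 / 2) / Real.sqrt (2 * Real.pi)

lemma gaussianPDF_eq (w : ℝ) : gaussianPDF 0 1 w = ENNReal.ofReal (phi w) := by
  unfold gaussianPDF gaussianPDFReal phi
  congr 1
  simp only [NNReal.coe_one, mul_one, sub_zero, div_eq_mul_inv]
  ring

lemma phi_nonneg (w : ℝ) : 0 ≤ phi w := by
  unfold phi; positivity

lemma phi_meas : Measurable fun w => (phi w).toNNReal := by
  apply Measurable.real_toNNReal
  unfold phi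
  exact (((measurable_id.pow_const 2).neg.div_const 2).exp).div_const _

lemma gaussianReal_eq : gaussianReal 0 1 =
    volume.withDensity (fun w => ((phi w).toNNReal : ENNReal)) := by
  rw [gaussianReal_of_var_ne_zero _ one_ne_zero]
  congr 1; funext w; rw [gaussianPDF_eq]; rfl

lemma integral_gaussianReal_eq (f : ℝ → ℝ) :
    ∫ w, f w ∂(gaussianReal 0 1) = ∫ w, f w * phi w := by
  rw [gaussianReal_eq, integral_withDensity_eq_integral_smul phi_meas]
  congr 1; funext w
  rw [NNReal.smul_def, smul_eq_mul, Real.coe_toNNReal _ (phi_nonneg w), mul_comm]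

lemma integrable_gaussianReal_iff (f : ℝ → ℝ) :
    Integrable f (gaussianReal 0 1) ↔ Integrable (fun w => f w * phi w) := by
  rw [gaussianReal_eq, integrable_withDensity_iff_integrable_smul phi_meas]
  have : (fun w => (phi w).toNNReal • f w) = fun w => f w * phi w := by
    funext w
    rw [NNReal.smul_def, smul_eq_mul, Real.coe_toNNReal _ (phi_nonneg w), mul_comm]
  rw [this]

lemma exp_mul_phi (y s : ℝ) :
    (fun w => Real.exp (y + s * w) * phi w)
      = fun w => Real.exp (y + s ^ 2 / 2) * phi (w - s) := by
  funext w; unfold phi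
  rw [mul_div_assoc', mul_div_assoc', ← Real.exp_add, ← Real.exp_add]
  congr 2; ring

lemma gauss_call (s : ℝ) (hs : 0 < s) (y κ : ℝ) :
    ∫ w, max (Real.exp (y + s * w) - Real.exp κ) 0 ∂(gaussianReal 0 1)
    = Real.exp (y + s ^ 2 / 2) * stdNormalCDF ((y - κ) / s + s)
      - Real.exp κ * stdNormalCDF ((y - κ) / s) := by
  rw [integral_gaussianReal_eq]
  set c : ℝ := (κ - y) / s with hc
  have key : (fun w => max (Real.exp (y + s * w) - Real.exp κ) 0 * phi w)
      = (Ici c).indicator (fun w => (Real.exp (y + s * w) - Real.exp κ) * phi w) := by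
    funext w
    by_cases h : w ∈ Ici c
    · rw [indicator_of_mem h]
      congr 1
      rw [max_eq_left]
      rw [sub_nonneg, Real.exp_le_exp]
      rw [mem_Ici, hc, div_le_iff₀ hs] at h
      linarith [h]
    · rw [indicator_of_notMem h, max_eq_right, zero_mul]
      rw [mem_Ici, not_le, hc] at h
      rw [lt_div_iff₀ hs] at h
      rw [sub_nonpos, Real.exp_le_exp]
      linarith [h]
  rw [key, integral_indicator measurableSet_Ici]
  have hint1 : Integrable (fun w => Real.exp (y + s * w) * phi w) := by
    rw [exp_mul_phi]
    exact (phi_integrable.comp_sub_right s).const_mul _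
  have hint2 : Integrable (fun w => Real.exp κ * phi w) := phi_integrable.const_mul _
  have hsplit : ∫ w in Ici c, (Real.exp (y + s * w) - Real.exp κ) * phi w
      = (∫ w in Ici c, Real.exp (y + s * w) * phi w)
        - ∫ w in Ici c, Real.exp κ * phi w := by
    simp_rw [sub_mul]
    exact integral_sub hint1.integrableOn hint2.integrableOn
  rw [hsplit]
  have h1 : ∫ w in Ici c, Real.exp (y + s * w) * phi w
      = Real.exp (y + s ^ 2 / 2) * stdNormalCDF ((y - κ) / s + s) := by
    rw [exp_mul_phi, MeasureTheory.integral_const_mul]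
    unfold phi
    rw [integral_Ici_comp_sub c s (fun t => Real.exp (-t ^ 2 / 2) / Real.sqrt (2 * Real.pi)), integral_Ici_phi]
    congr 2
    rw [hc]; ring
  have h2 : ∫ w in Ici c, Real.exp κ * phi w
      = Real.exp κ * stdNormalCDF ((y - κ) / s) := by
    rw [MeasureTheory.integral_const_mul]
    unfold phi
    rw [integral_Ici_phi]
    congr 2
    rw [hc]; ring
  rw [h1, h2]

lemma phi_pos' (t : ℝ) : 0 < Real.exp (-t ^ 2 / 2) / Real.sqrt (2 * Real.pi) :=
  div_pos (Real.exp_pos _) (Real.sqrt_pos.2 (by positivity))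

lemma integral_phi : ∫ t : ℝ, Real.exp (-t ^ 2 / 2) / Real.sqrt (2 * Real.pi) = 1 := by
  have h : ∫ t : ℝ, Real.exp (-(1/2 : ℝ) * t ^ 2) = Real.sqrt (π / (1/2)) := integral_gaussian _
  have h2 : (fun t : ℝ => Real.exp (-t ^ 2 / 2)) = fun t : ℝ => Real.exp (-(1/2) * t ^ 2) := by
    funext t; ring_nf
  rw [integral_div, h2, h]
  rw [show π / (1/2 : ℝ) = 2 * π by ring]
  field_simp

lemma stdNormalCDF_nonneg (x : ℝ) : 0 ≤ stdNormalCDF x :=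
  integral_nonneg fun t => (phi_pos' t).le

lemma stdNormalCDF_le_one (x : ℝ) : stdNormalCDF x ≤ 1 := by
  rw [← integral_phi]
  exact setIntegral_le_integral phi_integrable (ae_of_all _ fun t => (phi_pos' t).le)

lemma stdNormalCDF_mono : Monotone stdNormalCDF := fun a b hab =>
  setIntegral_mono_set phi_integrable.integrableOn
    (ae_of_all _ fun t => (phi_pos' t).le) (HasSubset.Subset.eventuallyLE (Iic_subset_Iic.2 hab))

lemma stdNormalCDF_measurable : Measurable stdNormalCDF := stdNormalCDF_mono.measurable

end CallPriceAux

/-- **Representation formula for the call price.** With `Λ, B` `G`-measurable such that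
`e^{−Λ}` and `e^{σρB}` are integrable, `W` independent of `G` and standard Gaussian,
`X = x + Λ − σ²T/2 + σρB + σ√((1−ρ²)T)·W`,
`d₁ = (x − κ + Λ + σρB + σ²T/2 − σ²ρ²T)/(σ√((1−ρ²)T))` and
`d₂ = (x − κ + Λ + σρB − σ²T/2)/(σ√((1−ρ²)T))`, one has
`E[e^{−Λ}(e^X − e^κ)^+] = e^{x − σ²ρ²T/2} E[e^{σρB} Φ(d₁)] − e^κ E[e^{−Λ} Φ(d₂)]`. -/
theorem stmt_6 {Ω : Type*} {F : MeasurableSpace Ω} (P : Measure Ω) [IsProbabilityMeasure P]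
    (G : MeasurableSpace Ω) (hG : G ≤ F)
    (σ T ρ x κ : ℝ) (hσ : 0 < σ) (hT : 0 < T) (hρ : ρ ∈ Set.Ioo (-1 : ℝ) 1)
    (Λ B : Ω → ℝ) (hΛ : Measurable[G] Λ) (hB : Measurable[G] B)
    (hΛint : Integrable (fun ω => Real.exp (-Λ ω)) P)
    (hBint : Integrable (fun ω => Real.exp (σ * ρ * B ω)) P)
    (W : Ω → ℝ) (hW : Measurable[F] W)
    (hindep : Indep (MeasurableSpace.comap W inferInstance) G P)
    (hlaw : @Measure.map Ω ℝ F _ W P = gaussianReal 0 1)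
    (X d₁ d₂ : Ω → ℝ)
    (hX : X = fun ω => x + Λ ω - σ ^ 2 * T / 2 + σ * ρ * B ω +
      σ * Real.sqrt ((1 - ρ ^ 2) * T) * W ω)
    (hd₁ : d₁ = fun ω => (x - κ + Λ ω + σ * ρ * B ω + σ ^ 2 * T / 2 - σ ^ 2 * ρ ^ 2 * T) /
      (σ * Real.sqrt ((1 - ρ ^ 2) * T)))
    (hd₂ : d₂ = fun ω => (x - κ + Λ ω + σ * ρ * B ω - σ ^ 2 * T / 2) /
      (σ * Real.sqrt ((1 - ρ ^ 2) * T))) :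
    ∫ ω, Real.exp (-Λ ω) * max (Real.exp (X ω) - Real.exp κ) 0 ∂P =
      Real.exp (x - σ ^ 2 * ρ ^ 2 * T / 2) *
          ∫ ω, Real.exp (σ * ρ * B ω) * stdNormalCDF (d₁ ω) ∂P -
        Real.exp κ * ∫ ω, Real.exp (-Λ ω) * stdNormalCDF (d₂ ω) ∂P := by
  subst hX hd₁ hd₂
  have hρ2 : ρ ^ 2 < 1 := by
    obtain ⟨h1, h2⟩ := hρ
    nlinarith
  set s : ℝ := σ * Real.sqrt ((1 - ρ ^ 2) * T) with hsdef
  have hs : 0 < s := by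
    apply mul_pos hσ
    apply Real.sqrt_pos.2
    nlinarith
  have hsq : Real.sqrt ((1 - ρ ^ 2) * T) ^ 2 = (1 - ρ ^ 2) * T :=
    Real.sq_sqrt (by nlinarith)
  have hs2 : s ^ 2 = σ ^ 2 * ((1 - ρ ^ 2) * T) := by
    rw [hsdef, mul_pow, hsq]
  set Z : Ω → ℝ × ℝ := fun ω => (Λ ω, B ω) with hZdef
  have hZG : Measurable[G] Z := hΛ.prodMk hB
  have hZ : Measurable[F] Z := hZG.mono hG le_rfl
  have hIndepZW : IndepFun Z W P :=
    (indep_of_indep_of_le_right hindep hZG.comap_le).symm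
  clear hindep hZG hΛ hB hG
  clear G
  set ν : Measure (ℝ × ℝ) := Measure.map Z P with hνdef
  haveI : IsProbabilityMeasure ν := Measure.isProbabilityMeasure_map hZ.aemeasurable
  set γ : Measure ℝ := gaussianReal 0 1 with hγdef
  have hmap : Measure.map (fun ω => (Z ω, W ω)) P = ν.prod γ := by
    have h := (indepFun_iff_map_prod_eq_prod_map_map hZ.aemeasurable hW.aemeasurable).mp hIndepZW
    rw [hlaw] at h
    exact h
  set F₀ : (ℝ × ℝ) × ℝ → ℝ := fun q => Real.exp (-q.1.1) *
    max (Real.exp (x + q.1.1 - σ ^ 2 * T / 2 + σ * ρ * q.1.2 + s * q.2) - Real.exp κ) 0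
    with hF₀def
  have hF₀cont : Continuous F₀ := by
    apply Continuous.mul
    · exact (continuous_fst.fst.neg).rexp
    · exact Continuous.max (by fun_prop) continuous_const
  set bound : (ℝ × ℝ) × ℝ → ℝ := fun q =>
    (Real.exp (x - σ ^ 2 * T / 2) * Real.exp (σ * ρ * q.1.2)) * Real.exp (s * q.2) with hbdef
  have hexpB : Integrable (fun p : ℝ × ℝ => Real.exp (x - σ ^ 2 * T / 2) *
      Real.exp (σ * ρ * p.2)) ν := by
    rw [hνdef, integrable_map_measure
      (Continuous.aestronglyMeasurable (by fun_prop)) hZ.aemeasurable]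
    exact (hBint.const_mul _).congr (ae_of_all _ fun ω => rfl)
  have hexpW : Integrable (fun w => Real.exp (s * w)) γ := by
    rw [hγdef, integrable_gaussianReal_iff]
    have h := exp_mul_phi 0 s
    simp only [zero_add] at h
    rw [h]
    exact (phi_integrable.comp_sub_right s).const_mul _
  have hbound : Integrable bound (ν.prod γ) := Integrable.mul_prod hexpB hexpW
  have hFint : Integrable F₀ (ν.prod γ) := by
    refine hbound.mono' hF₀cont.aestronglyMeasurable (ae_of_all _ fun q => ?_)
    have h0 : 0 ≤ F₀ q := mul_nonneg (Real.exp_pos _).le (le_max_right _ _)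
    rw [Real.norm_eq_abs, abs_of_nonneg h0]
    calc F₀ q ≤ Real.exp (-q.1.1) *
        Real.exp (x + q.1.1 - σ ^ 2 * T / 2 + σ * ρ * q.1.2 + s * q.2) := by
          apply mul_le_mul_of_nonneg_left _ (Real.exp_pos _).le
          exact max_le (sub_le_self _ (Real.exp_pos _).le) (Real.exp_pos _).le
      _ = bound q := by
          rw [hbdef]
          show _ = Real.exp (x - σ ^ 2 * T / 2) * Real.exp (σ * ρ * q.1.2) * Real.exp (s * q.2)
          rw [← Real.exp_add, ← Real.exp_add, ← Real.exp_add]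
          congr 1
          ring
  have stepA : ∫ ω, Real.exp (-Λ ω) * max (Real.exp (x + Λ ω - σ ^ 2 * T / 2 + σ * ρ * B ω +
      s * W ω) - Real.exp κ) 0 ∂P = ∫ q, F₀ q ∂(ν.prod γ) := by
    rw [← hmap, integral_map (hZ.prodMk hW).aemeasurable hF₀cont.aestronglyMeasurable]
  set D₁ : ℝ × ℝ → ℝ := fun p => (x - κ + p.1 + σ * ρ * p.2 + σ ^ 2 * T / 2
    - σ ^ 2 * ρ ^ 2 * T) / s with hD₁def
  set D₂ : ℝ × ℝ → ℝ := fun p => (x - κ + p.1 + σ * ρ * p.2 - σ ^ 2 * T / 2) / s with hD₂def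
  have hD₁m : Measurable D₁ := by fun_prop
  have hD₂m : Measurable D₂ := by fun_prop
  have hinner : ∀ p : ℝ × ℝ, ∫ w, F₀ (p, w) ∂γ =
      Real.exp (x - σ ^ 2 * ρ ^ 2 * T / 2) * (Real.exp (σ * ρ * p.2) * stdNormalCDF (D₁ p))
        - Real.exp κ * (Real.exp (-p.1) * stdNormalCDF (D₂ p)) := by
    intro p
    simp only [hF₀def]
    rw [MeasureTheory.integral_const_mul, hγdef,
      gauss_call s hs (x + p.1 - σ ^ 2 * T / 2 + σ * ρ * p.2) κ]
    have e1 : (x + p.1 - σ ^ 2 * T / 2 + σ * ρ * p.2 - κ) / s + s = D₁ p := by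
      simp only [hD₁def]
      rw [div_add' _ _ _ hs.ne']
      congr 1
      linear_combination hs2
    have e2 : (x + p.1 - σ ^ 2 * T / 2 + σ * ρ * p.2 - κ) / s = D₂ p := by
      simp only [hD₂def]; ring
    rw [e1, e2]
    have hc : Real.exp (-p.1) * Real.exp (x + p.1 - σ ^ 2 * T / 2 + σ * ρ * p.2 + s ^ 2 / 2)
        = Real.exp (x - σ ^ 2 * ρ ^ 2 * T / 2) * Real.exp (σ * ρ * p.2) := by
      rw [← Real.exp_add, ← Real.exp_add]
      congr 1
      linear_combination hs2 / 2
    linear_combination stdNormalCDF (D₁ p) * hc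
  have hΦ₁int : Integrable (fun p : ℝ × ℝ => Real.exp (σ * ρ * p.2) * stdNormalCDF (D₁ p)) ν := by
    have hb : Integrable (fun p : ℝ × ℝ => Real.exp (σ * ρ * p.2)) ν := by
      rw [hνdef, integrable_map_measure
        (Continuous.aestronglyMeasurable (by fun_prop)) hZ.aemeasurable]
      exact hBint.congr (ae_of_all _ fun ω => rfl)
    refine hb.mono' ?_ (ae_of_all _ fun p => ?_)
    · exact ((measurable_snd.const_mul _).exp.mul
        (stdNormalCDF_measurable.comp hD₁m)).aestronglyMeasurable
    · rw [Real.norm_eq_abs, abs_of_nonneg (mul_nonneg (Real.exp_pos _).le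
        (stdNormalCDF_nonneg _))]
      calc Real.exp (σ * ρ * p.2) * stdNormalCDF (D₁ p)
          ≤ Real.exp (σ * ρ * p.2) * 1 :=
            mul_le_mul_of_nonneg_left (stdNormalCDF_le_one _) (Real.exp_pos _).le
        _ = Real.exp (σ * ρ * p.2) := mul_one _
  have hΦ₂int : Integrable (fun p : ℝ × ℝ => Real.exp (-p.1) * stdNormalCDF (D₂ p)) ν := by
    have hb : Integrable (fun p : ℝ × ℝ => Real.exp (-p.1)) ν := by
      rw [hνdef, integrable_map_measure
        (Continuous.aestronglyMeasurable (by fun_prop)) hZ.aemeasurable]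
      exact hΛint.congr (ae_of_all _ fun ω => rfl)
    refine hb.mono' ?_ (ae_of_all _ fun p => ?_)
    · exact (measurable_fst.neg.exp.mul
        (stdNormalCDF_measurable.comp hD₂m)).aestronglyMeasurable
    · rw [Real.norm_eq_abs, abs_of_nonneg (mul_nonneg (Real.exp_pos _).le
        (stdNormalCDF_nonneg _))]
      calc Real.exp (-p.1) * stdNormalCDF (D₂ p)
          ≤ Real.exp (-p.1) * 1 :=
            mul_le_mul_of_nonneg_left (stdNormalCDF_le_one _) (Real.exp_pos _).le
        _ = Real.exp (-p.1) := mul_one _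
  rw [stepA, MeasureTheory.integral_prod F₀ hFint]
  have houter : ∫ p, (∫ w, F₀ (p, w) ∂γ) ∂ν =
      Real.exp (x - σ ^ 2 * ρ ^ 2 * T / 2) *
        (∫ p, Real.exp (σ * ρ * p.2) * stdNormalCDF (D₁ p) ∂ν)
      - Real.exp κ * ∫ p, Real.exp (-p.1) * stdNormalCDF (D₂ p) ∂ν := by
    rw [← MeasureTheory.integral_const_mul, ← MeasureTheory.integral_const_mul,
      ← integral_sub (hΦ₁int.const_mul _) (hΦ₂int.const_mul _)]
    exact integral_congr_ae (ae_of_all _ fun p => hinner p)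
  rw [houter]
  congr 1
  · congr 1
    have M₁ : Measurable fun p : ℝ × ℝ => Real.exp (σ * ρ * p.2) * stdNormalCDF (D₁ p) :=
      (measurable_snd.const_mul _).exp.mul (stdNormalCDF_measurable.comp hD₁m)
    rw [hνdef, integral_map hZ.aemeasurable M₁.aestronglyMeasurable]
  · congr 1
    have M₂ : Measurable fun p : ℝ × ℝ => Real.exp (-p.1) * stdNormalCDF (D₂ p) :=
      measurable_fst.neg.exp.mul (stdNormalCDF_measurable.comp hD₂m)
    rw [hνdef, integral_map hZ.aemeasurable M₂.aestronglyMeasurable]
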